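/- The Gerstenhaber bracket [f,g]_G = f\{g\} − (−1)^{(p−1)(q−1)} g\{f\} satisfies the graded Jacobi identity on Hochschild cochains: (−1)^{(p−1)(r−1)}[[f,g],h] + (−1)^{(q−1)(p−1)}[[g,h],f] + (−1)^{(r−1)(q−1)}[[h,f],g] = 0 for cochains f, g, h of degrees p, q, r. -/

import Mathlib

set_option linter.unusedSectionVars false
set_option linter.unusedVariables false
set_option maxHeartbeats 1000000


section Hochschild

variable {k A : Type*} [CommRing k] [Ring A] [Algebra k A]

/-- `sgn n x = (-1)^n • x`. -/
def sgn {A : Type*} [Neg A] (n : ℤ) (x : A) : A := if Even n then x else -x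

/-- A `k`-multilinear map `A^{⊗n} → A` (a Hochschild `n`-cochain) viewed as a function on
sequences, reading the first `n` entries. -/
def seqOf {n : ℕ} (f : MultilinearMap k (fun _ : Fin n => A) A) : (ℕ → A) → A :=
  fun a => f fun i => a i

/-- The cup product of cochains; `p` is the degree of `f`:
`(f ⌣ g)(a_1,…,a_{p+q}) = f(a_1,…,a_p) * g(a_{p+1},…,a_{p+q})`. -/
def cup (p : ℕ) (f g : (ℕ → A) → A) : (ℕ → A) → A :=
  fun a => f a * g fun i => a (i + p)

/-- The circle (brace) product `f{g}` of a degree `p` cochain `f` and a degree `q` cochain `g`: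
`f{g}(a_1,…,a_{p+q−1}) = Σ_{i=1}^{p} (−1)^{(q−1)(i−1)}
  f(a_1,…,a_{i−1}, g(a_i,…,a_{i+q−1}), a_{i+q},…,a_{p+q−1})` (indices here 0-based). -/
def circ (p q : ℕ) (f g : (ℕ → A) → A) : (ℕ → A) → A :=
  fun a => ∑ i ∈ Finset.range p,
    sgn (((q : ℤ) - 1) * (i : ℤ))
      (f fun j => if j < i then a j
        else if j = i then g (fun l => a (l + i))
        else a (j + q - 1))

/-- The Hochschild codifferential of a degree `n` cochain:
`(df)(a_1,…,a_{n+1}) = a_1 f(a_2,…,a_{n+1}) + Σ_{i=1}^n (−1)^i f(a_1,…,a_i a_{i+1},…,a_{n+1})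
 + (−1)^{n+1} f(a_1,…,a_n) a_{n+1}`. -/
def hd (n : ℕ) (f : (ℕ → A) → A) : (ℕ → A) → A := fun a =>
  a 0 * f (fun i => a (i + 1)) +
    (∑ i ∈ Finset.range n, sgn ((i : ℤ) + 1)
      (f fun j => if j < i then a j else if j = i then a i * a (i + 1) else a (j + 1))) +
    sgn ((n : ℤ) + 1) (f a * a n)

/-- The signed codifferential `∂f = (−1)^{|f|} df`. -/
def pd (n : ℕ) (f : (ℕ → A) → A) : (ℕ → A) → A := fun a => sgn (n : ℤ) (hd n f a)

end Hochschild

section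
variable {k A : Type*} [CommRing k] [Ring A] [Algebra k A]

/-- The Gerstenhaber bracket `[f,g]_G = f{g} − (−1)^{(p−1)(q−1)} g{f}` of cochains of
degrees `p` and `q`; it has degree `p + q − 1`. -/
def gbracket (p q : ℕ) (f g : (ℕ → A) → A) : (ℕ → A) → A :=
  fun a => circ p q f g a - sgn (((p : ℤ) - 1) * ((q : ℤ) - 1)) (circ q p g f a)

end

namespace GJ
open Finset

section SgnLemmas
variable {B C : Type*} [AddCommGroup B] [AddCommGroup C]

theorem sgn_sgn (m n : ℤ) (x : B) : sgn m (sgn n x) = sgn (m + n) x := by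
  unfold sgn
  rcases Int.even_or_odd m with hm | hm <;> rcases Int.even_or_odd n with hn | hn <;>
    simp [hm, hn, Int.even_add, Int.not_even_iff_odd.mpr, neg_neg] <;> tauto

theorem sgn_congr {m n : ℤ} (h : Even (m - n)) (x : B) : sgn m x = sgn n x := by
  have hiff : Even m ↔ Even n := Int.even_sub.mp h
  unfold sgn; simp only [hiff]

theorem sgn_zero (n : ℤ) : sgn n (0 : B) = 0 := by unfold sgn; split <;> simp
theorem sgn_even {n : ℤ} (h : Even n) (x : B) : sgn n x = x := if_pos h
theorem sgn_add (n : ℤ) (x y : B) : sgn n (x + y) = sgn n x + sgn n y := by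
  unfold sgn; split <;> [rfl; rw [neg_add]]
theorem sgn_sub (n : ℤ) (x y : B) : sgn n (x - y) = sgn n x - sgn n y := by
  unfold sgn; split <;> [rfl; abel_nf]
theorem sgn_neg (n : ℤ) (x : B) : sgn n (-x) = - sgn n x := by
  unfold sgn; split <;> simp
theorem sgn_sum {ι : Type*} (s : Finset ι) (n : ℤ) (F : ι → B) :
    sgn n (∑ i ∈ s, F i) = ∑ i ∈ s, sgn n (F i) := by
  unfold sgn; split <;> simp
theorem sgn_sub_expand (e1 e2 : ℤ) (x y : B) :
    sgn e1 (x - sgn e2 y) = sgn e1 x - sgn (e1 + e2) y := by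
  rw [sgn_sub, sgn_sgn]
theorem map_sgn (φ : B →+ C) (e : ℤ) (x : B) : φ (sgn e x) = sgn e (φ x) := by
  unfold sgn; split <;> simp

theorem tri {M : Type*} [AddCommMonoid M] (p : ℕ) (F : ℕ → ℕ → M) :
    ∑ j ∈ range p, ∑ i ∈ range j, F i j = ∑ i ∈ range p, ∑ j ∈ Ico (i+1) p, F i j := by
  induction p with
  | zero => simp
  | succ n ih =>
    rw [Finset.sum_range_succ, ih, Finset.sum_range_succ (fun i => ∑ j ∈ Ico (i+1) (n+1), F i j)]
    have h1 : ∀ i ∈ Finset.range n,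
        ∑ j ∈ Ico (i+1) (n+1), F i j = (∑ j ∈ Ico (i+1) n, F i j) + F i n := by
      intro i hi
      rw [Finset.sum_Ico_succ_top (by simp at hi; omega)]
    rw [Finset.sum_congr rfl h1, Finset.sum_add_distrib]
    simp

theorem range_split {M : Type*} [AddCommMonoid M] (p q j : ℕ) (hj : j < p) (T : ℕ → M) :
    ∑ i ∈ range (p + q - 1), T i
      = (∑ i ∈ range j, T i) + (∑ t ∈ range q, T (j + t)) + ∑ i ∈ Ico (j+1) p, T (i + q - 1) := by
  have e1 : ∑ i ∈ range (p + q - 1), T i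
      = ∑ i ∈ Ico 0 j, T i + (∑ i ∈ Ico j (j + q), T i + ∑ i ∈ Ico (j + q) (p + q - 1), T i) := by
    rw [Finset.sum_Ico_consecutive T (m := j) (n := j + q) (k := p + q - 1) (by omega) (by omega),
      Finset.sum_Ico_consecutive T (m := 0) (n := j) (k := p + q - 1) (by omega) (by omega)]
    rw [range_eq_Ico]
  rw [e1]
  have e2 : ∑ i ∈ Ico 0 j, T i = ∑ i ∈ range j, T i := by rw [range_eq_Ico]
  have e3 : ∑ i ∈ Ico j (j + q), T i = ∑ t ∈ range q, T (j + t) := by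
    rw [Finset.sum_Ico_eq_sum_range]
    apply Finset.sum_congr (by congr 1; omega) (fun t ht => rfl)
  have e4 : ∑ i ∈ Ico (j + q) (p + q - 1), T i = ∑ i ∈ Ico (j+1) p, T (i + q - 1) := by
    rw [Finset.sum_Ico_eq_sum_range, Finset.sum_Ico_eq_sum_range]
    apply Finset.sum_congr (by congr 1; omega)
    intro t ht
    simp only [mem_range] at ht
    exact congrArg T (by omega)
  rw [e2, e3, e4, add_assoc]

end SgnLemmas

variable {k A : Type*} [CommRing k] [Ring A] [Algebra k A]

/-- Insertion of `G` (a cochain consuming `s` inputs) at slot `i` of `F`. -/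
def ins (i s : ℕ) (F G : (ℕ → A) → A) : (ℕ → A) → A :=
  fun a => F fun j => if j < i then a j else if j = i then G (fun l => a (l + i)) else a (j + s - 1)

theorem circ_eq (p q : ℕ) (F G : (ℕ → A) → A) (a : ℕ → A) :
    circ p q F G a = ∑ i ∈ Finset.range p, sgn (((q : ℤ) - 1) * (i : ℤ)) (ins i q F G a) := rfl

def slotSeq (i : ℕ) (b c : ℕ → A) (x : A) : ℕ → A :=
  fun j => if j < i then b j else if j = i then x else c j

theorem ins_apply (i s : ℕ) (F G : (ℕ → A) → A) (a : ℕ → A) :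
    ins i s F G a = F (slotSeq i a (fun j => a (j + s - 1)) (G fun l => a (l + i))) := rfl

/-- The value of `seqOf f` on `slotSeq i b c x`, as an additive hom in `x`. -/
def slotHom {p : ℕ} (f : MultilinearMap k (fun _ : Fin p => A) A) (i : ℕ) (hi : i < p)
    (b c : ℕ → A) : A →+ A :=
  AddMonoidHom.mk' (fun x => f (Function.update (fun j : Fin p => slotSeq i b c 0 j.1) ⟨i, hi⟩ x))
    (fun x y => f.map_update_add _ ⟨i, hi⟩ x y)

theorem seqOf_slot {p : ℕ} (f : MultilinearMap k (fun _ : Fin p => A) A) (i : ℕ) (hi : i < p)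
    (b c : ℕ → A) (x : A) : seqOf f (slotSeq i b c x) = slotHom f i hi b c x := by
  unfold seqOf slotHom
  simp only [AddMonoidHom.mk'_apply]
  apply congrArg
  funext j
  rcases j with ⟨j, hj⟩
  by_cases hji : j = i
  · subst hji
    simp [Function.update, slotSeq]
  · have hne : (⟨j, hj⟩ : Fin p) ≠ ⟨i, hi⟩ := by simp [Fin.ext_iff, hji]
    rw [Function.update_of_ne hne]
    simp [slotSeq, hji]

def Reads (N : ℕ) (F : (ℕ → A) → A) : Prop :=
  ∀ a b : ℕ → A, (∀ i, i < N → a i = b i) → F a = F b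

theorem reads_seqOf {n : ℕ} (f : MultilinearMap k (fun _ : Fin n => A) A) :
    Reads n (seqOf f) := fun a b h => congrArg f (funext fun i => h i i.2)

/-- nested insertion: inserting `H` inside the `G`-block. -/
theorem ins_nested (j t q r : ℕ) (ht : t < q) (F G H : (ℕ → A) → A) (a : ℕ → A) :
    ins (j + t) r (ins j q F G) H a = ins j (q + r - 1) F (ins t r G H) a := by
  unfold ins
  apply congrArg
  funext m
  dsimp only
  split_ifs <;> first
    | rfl
    | omega
    | exact congrArg a (by omega)
    | (apply congrArg; funext l; (try dsimp only); split_ifs <;> first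
        | rfl
        | omega
        | exact congrArg a (by omega)
        | (apply congrArg; funext l'; (try dsimp only); exact congrArg a (by omega)))

/-- disjoint insertion, `H` strictly to the left of `G`. -/
theorem ins_left (i j q r : ℕ) (hij : i < j) (F G H : (ℕ → A) → A) (hH : Reads r H)
    (a : ℕ → A) :
    ins i r (ins j q F G) H a = ins (j + r - 1) q (ins i r F H) G a := by
  unfold ins
  apply congrArg
  funext m
  dsimp only
  split_ifs <;> first
    | rfl
    | omega
    | exact congrArg a (by omega)
    | (refine hH _ _ fun l hl => ?_; (try dsimp only); split_ifs <;> first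
        | rfl | omega | exact congrArg a (by omega))
    | (apply congrArg; funext l; (try dsimp only); split_ifs <;> first
        | rfl | omega | exact congrArg a (by omega))

/-- disjoint insertion, `H` strictly to the right of `G`. -/
theorem ins_right (i j q r : ℕ) (hij : j < i) (F G H : (ℕ → A) → A) (hG : Reads q G)
    (a : ℕ → A) :
    ins (i + q - 1) r (ins j q F G) H a = ins j q (ins i r F H) G a := by
  unfold ins
  apply congrArg
  funext m
  dsimp only
  split_ifs <;> first
    | rfl
    | omega
    | exact congrArg a (by omega)
    | (refine hG _ _ fun l hl => ?_; (try dsimp only); split_ifs <;> first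
        | rfl | omega | exact congrArg a (by omega))
    | (apply congrArg; funext l; (try dsimp only); split_ifs <;> first
        | rfl | omega | exact congrArg a (by omega))

theorem circ_seqOf_zero (n s : ℕ) (f : MultilinearMap k (fun _ : Fin n => A) A)
    (Z : (ℕ → A) → A) (hZ : ∀ b, Z b = 0) (a : ℕ → A) :
    circ n s (seqOf f) Z a = 0 := by
  rw [circ_eq]
  apply Finset.sum_eq_zero
  intro i hi
  simp only [mem_range] at hi
  rw [ins_apply, hZ, seqOf_slot f i hi, map_zero, sgn_zero]

theorem circ_right_sub_sgn (n s : ℕ) (f : MultilinearMap k (fun _ : Fin n => A) A)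
    (X Y : (ℕ → A) → A) (e : ℤ) (a : ℕ → A) :
    circ n s (seqOf f) (fun b => X b - sgn e (Y b)) a
      = circ n s (seqOf f) X a - sgn e (circ n s (seqOf f) Y a) := by
  rw [circ_eq, circ_eq, circ_eq, sgn_sum, ← Finset.sum_sub_distrib]
  apply Finset.sum_congr rfl
  intro i hi
  simp only [mem_range] at hi
  rw [ins_apply, ins_apply, ins_apply, seqOf_slot f i hi, seqOf_slot f i hi, seqOf_slot f i hi]
  rw [map_sub, map_sgn, sgn_sub, sgn_sgn, sgn_sgn]
  congr 1
  exact sgn_congr ⟨0, by ring⟩ _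

theorem circ_left_sub_sgn (n s : ℕ) (X Y H : (ℕ → A) → A) (e : ℤ) (a : ℕ → A) :
    circ n s (fun b => X b - sgn e (Y b)) H a
      = circ n s X H a - sgn e (circ n s Y H a) := by
  rw [circ_eq, circ_eq, circ_eq, sgn_sum, ← Finset.sum_sub_distrib]
  apply Finset.sum_congr rfl
  intro i hi
  have : ins i s (fun b => X b - sgn e (Y b)) H a = ins i s X H a - sgn e (ins i s Y H a) := rfl
  rw [this, sgn_sub, sgn_sgn, sgn_sgn]
  congr 1
  exact sgn_congr ⟨0, by ring⟩ _

theorem nested_row (p q r j : ℕ) (hj : j < p) (f : MultilinearMap k (fun _ : Fin p => A) A)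
    (G H : (ℕ → A) → A) (a : ℕ → A) :
    ∑ t ∈ range q, sgn (((r:ℤ)-1)*((j+t : ℕ):ℤ) + ((q:ℤ)-1)*(j:ℤ))
        (ins (j+t) r (ins j q (seqOf f) G) H a)
      = sgn ((((q+r-1 : ℕ):ℤ)-1)*(j:ℤ)) (ins j (q+r-1) (seqOf f) (circ q r G H) a) := by
  rcases Nat.eq_zero_or_pos q with hq | hq
  · subst hq
    rw [Finset.range_zero, Finset.sum_empty, ins_apply]
    have hv : circ 0 r G H (fun l => a (l + j)) = 0 := by rw [circ_eq]; simp
    rw [hv, seqOf_slot f j hj, map_zero, sgn_zero]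
  · have hc : (((q+r-1 : ℕ)):ℤ) = (q:ℤ) + (r:ℤ) - 1 := by omega
    symm
    rw [ins_apply, circ_eq q r G H, seqOf_slot f j hj, map_sum, sgn_sum]
    apply Finset.sum_congr rfl
    intro t ht
    simp only [Finset.mem_range] at ht
    rw [ins_nested j t q r ht _ _ _ a]
    conv_rhs => rw [ins_apply, seqOf_slot f j hj]
    rw [map_sgn, sgn_sgn]
    exact sgn_congr ⟨0, by rw [hc]; push_cast; ring⟩ _

theorem expand (p q r : ℕ) (f : MultilinearMap k (fun _ : Fin p => A) A)
    (G H : (ℕ → A) → A) (hG : Reads q G) (hH : Reads r H) (a : ℕ → A) :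
    circ (p+q-1) r (circ p q (seqOf f) G) H a
      = circ p (q+r-1) (seqOf f) (circ q r G H) a
        + (∑ j ∈ range p, ∑ i ∈ range j, sgn (((r:ℤ)-1)*(i:ℤ) + ((q:ℤ)-1)*(j:ℤ))
            (ins (j+r-1) q (ins i r (seqOf f) H) G a))
        + (∑ j ∈ range p, ∑ i ∈ Ico (j+1) p, sgn (((r:ℤ)-1)*((i:ℤ)+(q:ℤ)-1) + ((q:ℤ)-1)*(j:ℤ))
            (ins j q (ins i r (seqOf f) H) G a)) := by
  have h2 : ∀ i : ℕ, ins i r (circ p q (seqOf f) G) H a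
      = ∑ j ∈ range p, sgn (((q:ℤ)-1)*(j:ℤ)) (ins i r (ins j q (seqOf f) G) H a) := fun i => rfl
  rw [circ_eq]
  simp only [h2, sgn_sum, sgn_sgn]
  rw [Finset.sum_comm]
  have key : ∀ j ∈ range p,
      ∑ i ∈ range (p+q-1), sgn (((r:ℤ)-1)*(i:ℤ) + ((q:ℤ)-1)*(j:ℤ))
          (ins i r (ins j q (seqOf f) G) H a)
        = (∑ i ∈ range j, sgn (((r:ℤ)-1)*(i:ℤ) + ((q:ℤ)-1)*(j:ℤ))
              (ins (j+r-1) q (ins i r (seqOf f) H) G a))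
          + sgn ((((q+r-1 : ℕ):ℤ)-1)*(j:ℤ)) (ins j (q+r-1) (seqOf f) (circ q r G H) a)
          + (∑ i ∈ Ico (j+1) p, sgn (((r:ℤ)-1)*((i:ℤ)+(q:ℤ)-1) + ((q:ℤ)-1)*(j:ℤ))
              (ins j q (ins i r (seqOf f) H) G a)) := by
    intro j hj
    simp only [Finset.mem_range] at hj
    rw [range_split p q j hj (fun i => sgn (((r:ℤ)-1)*(i:ℤ) + ((q:ℤ)-1)*(j:ℤ))
          (ins i r (ins j q (seqOf f) G) H a))]
    congr 1
    · congr 1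
      · apply Finset.sum_congr rfl
        intro i hi
        simp only [Finset.mem_range] at hi
        rw [ins_left i j q r hi _ _ _ hH]
      · exact nested_row p q r j hj f G H a
    · apply Finset.sum_congr rfl
      intro i hi
      simp only [Finset.mem_Ico] at hi
      rw [ins_right i j q r hi.1 _ _ _ hG]
      have hic : ((i + q - 1 : ℕ) : ℤ) = (i:ℤ) + (q:ℤ) - 1 := by omega
      exact sgn_congr ⟨0, by rw [hic]; ring⟩ _
  rw [Finset.sum_congr rfl key, Finset.sum_add_distrib, Finset.sum_add_distrib]
  have hcc : ∑ j ∈ range p, sgn ((((q+r-1 : ℕ):ℤ)-1)*(j:ℤ))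
      (ins j (q+r-1) (seqOf f) (circ q r G H) a) = circ p (q+r-1) (seqOf f) (circ q r G H) a :=
    (circ_eq _ _ _ _ _).symm
  rw [hcc]
  abel

theorem disj_swap (p q r : ℕ) (F G H : (ℕ → A) → A) (hH : Reads r H) (a : ℕ → A) :
    (∑ j ∈ range p, ∑ i ∈ range j, sgn (((r:ℤ)-1)*(i:ℤ) + ((q:ℤ)-1)*(j:ℤ))
        (ins (j+r-1) q (ins i r F H) G a))
      = sgn (((q:ℤ)-1)*((r:ℤ)-1))
        (∑ j ∈ range p, ∑ i ∈ Ico (j+1) p, sgn (((q:ℤ)-1)*((i:ℤ)+(r:ℤ)-1) + ((r:ℤ)-1)*(j:ℤ))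
            (ins j r (ins i q F G) H a)) := by
  rw [tri p (fun i j => sgn (((r:ℤ)-1)*(i:ℤ) + ((q:ℤ)-1)*(j:ℤ))
        (ins (j+r-1) q (ins i r F H) G a)), sgn_sum]
  apply Finset.sum_congr rfl
  intro u hu
  rw [sgn_sum]
  apply Finset.sum_congr rfl
  intro v hv
  simp only [Finset.mem_Ico] at hv
  rw [ins_left u v q r hv.1 F G H hH a, sgn_sgn]
  exact sgn_congr ⟨-(((q:ℤ)-1)*((r:ℤ)-1)), by ring⟩ _

/-- The graded pre-Lie (right-symmetry) identity for the circle product. -/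
theorem preLie (p q r : ℕ) (f : MultilinearMap k (fun _ : Fin p => A) A)
    (g : MultilinearMap k (fun _ : Fin q => A) A)
    (h : MultilinearMap k (fun _ : Fin r => A) A) (a : ℕ → A) :
    circ (p+q-1) r (circ p q (seqOf f) (seqOf g)) (seqOf h) a
      - circ p (q+r-1) (seqOf f) (circ q r (seqOf g) (seqOf h)) a
    = sgn (((q:ℤ)-1)*((r:ℤ)-1))
        (circ (p+r-1) q (circ p r (seqOf f) (seqOf h)) (seqOf g) a
          - circ p (r+q-1) (seqOf f) (circ r q (seqOf h) (seqOf g)) a) := by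
  have e1 := expand p q r f (seqOf g) (seqOf h) (reads_seqOf g) (reads_seqOf h) a
  have e2 := expand p r q f (seqOf h) (seqOf g) (reads_seqOf h) (reads_seqOf g) a
  have s1 := disj_swap p q r (seqOf f) (seqOf g) (seqOf h) (reads_seqOf h) a
  have s2 := disj_swap p r q (seqOf f) (seqOf h) (seqOf g) (reads_seqOf g) a
  rw [e1, e2]
  have collapse : ∀ x l rr : A, x + l + rr - x = l + rr := fun x l rr => by abel
  rw [collapse, collapse, s1]
  have s2' := congrArg (sgn (((r:ℤ)-1)*((q:ℤ)-1))) s2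
  rw [sgn_sgn, sgn_even ⟨((r:ℤ)-1)*((q:ℤ)-1), rfl⟩] at s2'
  rw [← s2', sgn_add, add_comm]
  congr 1
  exact sgn_congr ⟨0, by ring⟩ _

theorem gbracket_apply (P Q : ℕ) (X Y : (ℕ → A) → A) (a : ℕ → A) :
    gbracket P Q X Y a
      = circ P Q X Y a - sgn (((P:ℤ)-1)*((Q:ℤ)-1)) (circ Q P Y X a) := rfl

theorem term_expand (P Q R : ℕ) (hPQ : 1 ≤ P + Q)
    (u : MultilinearMap k (fun _ : Fin P => A) A)
    (v : MultilinearMap k (fun _ : Fin Q => A) A)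
    (w : MultilinearMap k (fun _ : Fin R => A) A) (a : ℕ → A) :
    sgn (((P:ℤ)-1)*((R:ℤ)-1)) (gbracket (P+Q-1) R (gbracket P Q (seqOf u) (seqOf v)) (seqOf w) a)
    = sgn (((P:ℤ)-1)*((R:ℤ)-1)) (circ (P+Q-1) R (circ P Q (seqOf u) (seqOf v)) (seqOf w) a)
      - sgn (((P:ℤ)-1)*((R:ℤ)-1) + ((P:ℤ)-1)*((Q:ℤ)-1))
          (circ (P+Q-1) R (circ Q P (seqOf v) (seqOf u)) (seqOf w) a)
      - sgn (((Q:ℤ)-1)*((R:ℤ)-1)) (circ R (P+Q-1) (seqOf w) (circ P Q (seqOf u) (seqOf v)) a)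
      + sgn (((Q:ℤ)-1)*((R:ℤ)-1) + ((P:ℤ)-1)*((Q:ℤ)-1))
          (circ R (P+Q-1) (seqOf w) (circ Q P (seqOf v) (seqOf u)) a) := by
  have hw : (((P+Q-1 : ℕ)):ℤ) = (P:ℤ) + (Q:ℤ) - 1 := by omega
  rw [gbracket_apply]
  rw [show gbracket P Q (seqOf u) (seqOf v)
      = (fun b => circ P Q (seqOf u) (seqOf v) b
          - sgn (((P:ℤ)-1)*((Q:ℤ)-1)) (circ Q P (seqOf v) (seqOf u) b)) from rfl]
  rw [circ_left_sub_sgn, circ_right_sub_sgn]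
  rw [sgn_sub_expand, sgn_sub_expand, sgn_sub_expand]
  rw [sgn_congr (show Even ((((P:ℤ)-1)*((R:ℤ)-1) + ((((P+Q-1 : ℕ)):ℤ)-1)*((R:ℤ)-1))
        - ((Q:ℤ)-1)*((R:ℤ)-1)) from ⟨((P:ℤ)-1)*((R:ℤ)-1), by rw [hw]; ring⟩)]
  rw [sgn_congr (show Even (((((P:ℤ)-1)*((R:ℤ)-1) + ((((P+Q-1 : ℕ)):ℤ)-1)*((R:ℤ)-1))
          + ((P:ℤ)-1)*((Q:ℤ)-1))
        - (((Q:ℤ)-1)*((R:ℤ)-1) + ((P:ℤ)-1)*((Q:ℤ)-1))) from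
      ⟨((P:ℤ)-1)*((R:ℤ)-1), by rw [hw]; ring⟩)]
  abel

theorem circ_zero_first (s : ℕ) (X Y : (ℕ → A) → A) (a : ℕ → A) : circ 0 s X Y a = 0 := by
  rw [circ_eq]; simp

theorem circ_left_vanish (n s : ℕ) (X H : (ℕ → A) → A) (hX : ∀ b, X b = 0) (a : ℕ → A) :
    circ n s X H a = 0 := by
  rw [circ_eq]
  apply Finset.sum_eq_zero
  intro i hi
  have hz : ins i s X H a = 0 := hX _
  rw [hz, sgn_zero]

def JJ (p q r : ℕ) (f : MultilinearMap k (fun _ : Fin p => A) A)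
    (g : MultilinearMap k (fun _ : Fin q => A) A)
    (h : MultilinearMap k (fun _ : Fin r => A) A) (a : ℕ → A) : A :=
  sgn (((p : ℤ) - 1) * ((r : ℤ) - 1))
      (gbracket (p + q - 1) r (gbracket p q (seqOf f) (seqOf g)) (seqOf h) a) +
    sgn (((q : ℤ) - 1) * ((p : ℤ) - 1))
      (gbracket (q + r - 1) p (gbracket q r (seqOf g) (seqOf h)) (seqOf f) a) +
    sgn (((r : ℤ) - 1) * ((q : ℤ) - 1))
      (gbracket (r + p - 1) q (gbracket r p (seqOf h) (seqOf f)) (seqOf g) a)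

theorem JJ_rot (p q r : ℕ) (f : MultilinearMap k (fun _ : Fin p => A) A)
    (g : MultilinearMap k (fun _ : Fin q => A) A)
    (h : MultilinearMap k (fun _ : Fin r => A) A) (a : ℕ → A) :
    JJ p q r f g h a = JJ q r p g h f a := by
  unfold JJ; abel

theorem jacobi_good (p q r : ℕ) (hpq : 1 ≤ p + q) (hqr : 1 ≤ q + r) (hrp : 1 ≤ r + p)
    (f : MultilinearMap k (fun _ : Fin p => A) A)
    (g : MultilinearMap k (fun _ : Fin q => A) A)
    (h : MultilinearMap k (fun _ : Fin r => A) A) (a : ℕ → A) :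
    JJ p q r f g h a = 0 := by
  unfold JJ
  rw [term_expand p q r hpq f g h a, term_expand q r p hqr g h f a, term_expand r p q hrp h f g a]
  -- normalize exponents to canonical forms
  rw [sgn_congr (show Even ((((q:ℤ)-1)*((r:ℤ)-1) + ((p:ℤ)-1)*((q:ℤ)-1))
        - (((p:ℤ)-1)*((q:ℤ)-1) + ((q:ℤ)-1)*((r:ℤ)-1))) from ⟨0, by ring⟩)]
  rw [sgn_congr (show Even ((((q:ℤ)-1)*((p:ℤ)-1)) - (((p:ℤ)-1)*((q:ℤ)-1))) from ⟨0, by ring⟩)]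
  rw [sgn_congr (show Even ((((q:ℤ)-1)*((p:ℤ)-1) + ((q:ℤ)-1)*((r:ℤ)-1))
        - (((p:ℤ)-1)*((q:ℤ)-1) + ((q:ℤ)-1)*((r:ℤ)-1))) from ⟨0, by ring⟩)]
  rw [sgn_congr (show Even ((((r:ℤ)-1)*((p:ℤ)-1)) - (((p:ℤ)-1)*((r:ℤ)-1))) from ⟨0, by ring⟩)]
  rw [sgn_congr (show Even ((((r:ℤ)-1)*((p:ℤ)-1) + ((q:ℤ)-1)*((r:ℤ)-1))
        - (((p:ℤ)-1)*((r:ℤ)-1) + ((q:ℤ)-1)*((r:ℤ)-1))) from ⟨0, by ring⟩)]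
  rw [sgn_congr (show Even ((((r:ℤ)-1)*((q:ℤ)-1)) - (((q:ℤ)-1)*((r:ℤ)-1))) from ⟨0, by ring⟩)]
  rw [sgn_congr (show Even ((((r:ℤ)-1)*((q:ℤ)-1) + ((r:ℤ)-1)*((p:ℤ)-1))
        - (((p:ℤ)-1)*((r:ℤ)-1) + ((q:ℤ)-1)*((r:ℤ)-1))) from ⟨0, by ring⟩)]
  rw [sgn_congr (show Even ((((p:ℤ)-1)*((q:ℤ)-1) + ((r:ℤ)-1)*((p:ℤ)-1))
        - (((p:ℤ)-1)*((r:ℤ)-1) + ((p:ℤ)-1)*((q:ℤ)-1))) from ⟨0, by ring⟩)]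
  -- the three pre-Lie instances
  have hP1 := preLie p q r f g h a
  rw [show p+r-1 = r+p-1 from by omega, show r+q-1 = q+r-1 from by omega] at hP1
  have g1 := congrArg (sgn (((p:ℤ)-1)*((r:ℤ)-1))) hP1
  rw [sgn_sub, sgn_sgn, sgn_sub] at g1
  have hP2 := preLie q r p g h f a
  rw [show q+p-1 = p+q-1 from by omega, show p+r-1 = r+p-1 from by omega] at hP2
  have g2 := congrArg (sgn (((p:ℤ)-1)*((q:ℤ)-1))) hP2
  rw [sgn_sub, sgn_sgn, sgn_sub] at g2
  rw [sgn_congr (show Even ((((p:ℤ)-1)*((q:ℤ)-1) + ((r:ℤ)-1)*((p:ℤ)-1))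
        - (((p:ℤ)-1)*((r:ℤ)-1) + ((p:ℤ)-1)*((q:ℤ)-1))) from ⟨0, by ring⟩),
      sgn_congr (show Even ((((p:ℤ)-1)*((q:ℤ)-1) + ((r:ℤ)-1)*((p:ℤ)-1))
        - (((p:ℤ)-1)*((r:ℤ)-1) + ((p:ℤ)-1)*((q:ℤ)-1))) from ⟨0, by ring⟩)] at g2
  have hP3 := preLie r p q h f g a
  rw [show r+q-1 = q+r-1 from by omega, show q+p-1 = p+q-1 from by omega] at hP3
  have g3 := congrArg (sgn (((q:ℤ)-1)*((r:ℤ)-1))) hP3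
  rw [sgn_sub, sgn_sgn, sgn_sub] at g3
  rw [sgn_congr (show Even ((((q:ℤ)-1)*((r:ℤ)-1) + ((p:ℤ)-1)*((q:ℤ)-1))
        - (((p:ℤ)-1)*((q:ℤ)-1) + ((q:ℤ)-1)*((r:ℤ)-1))) from ⟨0, by ring⟩),
      sgn_congr (show Even ((((q:ℤ)-1)*((r:ℤ)-1) + ((p:ℤ)-1)*((q:ℤ)-1))
        - (((p:ℤ)-1)*((q:ℤ)-1) + ((q:ℤ)-1)*((r:ℤ)-1))) from ⟨0, by ring⟩)] at g3
  rw [sub_eq_iff_eq_add.mp g1, sub_eq_iff_eq_add.mp g2, sub_eq_iff_eq_add.mp g3]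
  abel

theorem jacobi00 (r : ℕ) (f g : MultilinearMap k (fun _ : Fin 0 => A) A)
    (h : MultilinearMap k (fun _ : Fin r => A) A) (a : ℕ → A) :
    JJ 0 0 r f g h a = 0 := by
  unfold JJ
  rw [show (0+0-1 : ℕ) = 0 from rfl, show (0+r-1 : ℕ) = r-1 from by omega,
    show (r+0-1 : ℕ) = r-1 from by omega]
  have hFG : ∀ b, gbracket 0 0 (seqOf f) (seqOf g) b = 0 := by
    intro b
    rw [gbracket_apply, circ_zero_first, circ_zero_first, sgn_zero, sub_zero]
  have hGF : ∀ b, circ 0 0 (seqOf g) (seqOf f) b = 0 := fun b => circ_zero_first _ _ _ b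
  have t1 : gbracket 0 r (gbracket 0 0 (seqOf f) (seqOf g)) (seqOf h) a = 0 := by
    rw [gbracket_apply, circ_zero_first, circ_seqOf_zero r 0 h _ hFG a, sgn_zero, sub_zero]
  rw [t1, sgn_zero]
  have t2 : gbracket (r-1) 0 (gbracket 0 r (seqOf g) (seqOf h)) (seqOf f) a
      = - sgn ((((0:ℕ):ℤ)-1)*((r:ℤ)-1)) (circ (r-1) 0 (circ r 0 (seqOf h) (seqOf g)) (seqOf f) a) := by
    rw [gbracket_apply]
    rw [show gbracket 0 r (seqOf g) (seqOf h)
        = (fun b => circ 0 r (seqOf g) (seqOf h) b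
            - sgn ((((0:ℕ):ℤ)-1)*((r:ℤ)-1)) (circ r 0 (seqOf h) (seqOf g) b)) from rfl]
    rw [circ_left_sub_sgn, circ_right_sub_sgn]
    rw [circ_left_vanish (r-1) 0 _ _ (fun b => circ_zero_first _ _ _ b) a]
    rw [circ_zero_first, circ_zero_first]
    simp only [sgn_zero, sub_zero, zero_sub]
  have t3 : gbracket (r-1) 0 (gbracket r 0 (seqOf h) (seqOf f)) (seqOf g) a
      = circ (r-1) 0 (circ r 0 (seqOf h) (seqOf f)) (seqOf g) a := by
    rw [gbracket_apply]
    rw [show gbracket r 0 (seqOf h) (seqOf f)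
        = (fun b => circ r 0 (seqOf h) (seqOf f) b
            - sgn (((r:ℤ)-1)*(((0:ℕ):ℤ)-1)) (circ 0 r (seqOf f) (seqOf h) b)) from rfl]
    rw [circ_left_sub_sgn, circ_right_sub_sgn]
    rw [circ_left_vanish (r-1) 0 _ _ (fun b => circ_zero_first _ _ _ b) a]
    rw [circ_zero_first, circ_zero_first]
    simp only [sgn_zero, sub_zero, zero_sub, sub_self]
  rw [t2, t3]
  have hP := preLie r 0 0 h f g a
  rw [show r+0-1 = r-1 from by omega, show (0+0-1 : ℕ) = 0 from rfl] at hP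
  rw [circ_seqOf_zero r 0 h _ (fun b => circ_zero_first 0 _ _ b) a,
    circ_seqOf_zero r 0 h _ (fun b => circ_zero_first 0 _ _ b) a, sub_zero, sub_zero] at hP
  rw [hP, sgn_neg, sgn_sgn, sgn_sgn]
  rw [sgn_congr (show Even (((((0:ℕ):ℤ)-1)*(((0:ℕ):ℤ)-1) + (((0:ℕ):ℤ)-1)*((r:ℤ)-1))
      - (((r:ℤ)-1)*(((0:ℕ):ℤ)-1) + (((0:ℕ):ℤ)-1)*(((0:ℕ):ℤ)-1))) from ⟨0, by ring⟩)
      (circ (r-1) 0 (circ r 0 (seqOf h) (seqOf g)) (seqOf f) a)]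
  abel


end GJ

section
variable {k A : Type*} [CommRing k] [Ring A] [Algebra k A]

/-- **Graded Jacobi identity for the Gerstenhaber bracket**: for cochains `f, g, h` of degrees
`p, q, r`,
`(−1)^{(p−1)(r−1)}[[f,g],h] + (−1)^{(q−1)(p−1)}[[g,h],f] + (−1)^{(r−1)(q−1)}[[h,f],g] = 0`. -/
theorem gerstenhaber_bracket_jacobi (p q r : ℕ)
    (f : MultilinearMap k (fun _ : Fin p => A) A)
    (g : MultilinearMap k (fun _ : Fin q => A) A)
    (h : MultilinearMap k (fun _ : Fin r => A) A) (a : ℕ → A) :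
    sgn (((p : ℤ) - 1) * ((r : ℤ) - 1))
        (gbracket (p + q - 1) r (gbracket p q (seqOf f) (seqOf g)) (seqOf h) a) +
      sgn (((q : ℤ) - 1) * ((p : ℤ) - 1))
        (gbracket (q + r - 1) p (gbracket q r (seqOf g) (seqOf h)) (seqOf f) a) +
      sgn (((r : ℤ) - 1) * ((q : ℤ) - 1))
        (gbracket (r + p - 1) q (gbracket r p (seqOf h) (seqOf f)) (seqOf g) a) = 0 := by
  show GJ.JJ p q r f g h a = 0
  by_cases hpq : p = 0 ∧ q = 0
  · obtain ⟨hp, hq⟩ := hpq; subst hp; subst hq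
    exact GJ.jacobi00 r f g h a
  by_cases hqr : q = 0 ∧ r = 0
  · obtain ⟨hq, hr⟩ := hqr; subst hq; subst hr
    rw [GJ.JJ_rot]
    exact GJ.jacobi00 p g h f a
  by_cases hrp : r = 0 ∧ p = 0
  · obtain ⟨hr, hp⟩ := hrp; subst hr; subst hp
    rw [GJ.JJ_rot, GJ.JJ_rot]
    exact GJ.jacobi00 q h f g a
  · exact GJ.jacobi_good p q r (by omega) (by omega) (by omega) f g h a

end
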